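/- For every integer L ≥ 1 there exist integers ℓ, m ≥ L such that there are infinitely many pairs (a, b) of positive odd integers with s(a) = ℓ, s(b) = m, and s(ab) = 4. -/

import Mathlib

/-- `s n` is the number of nonzero digits (ones) in the binary expansion of `n`. -/
def s (n : ℕ) : ℕ := (Nat.digits 2 n).count 1

lemma s_zero : s 0 = 0 := by simp [s]

lemma s_one : s 1 = 1 := by simp [s]

lemma s_two_mul_add (m r : ℕ) (hr : r ≤ 1) : s (2 * m + r) = s m + r := by
  rcases Nat.eq_zero_or_pos (2 * m + r) with h0 | h0
  · have hm : m = 0 := by omega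
    have hr0 : r = 0 := by omega
    simp [hm, hr0, s_zero]
  · have h1 : (2 * m + r) % 2 = r := by omega
    have h2 : (2 * m + r) / 2 = m := by omega
    rw [s, Nat.digits_def' (by norm_num : 1 < 2) h0, h1, h2, List.count_cons]
    interval_cases r <;> simp [s]

lemma s_split (K y : ℕ) : ∀ x, x < 2 ^ K → s (2 ^ K * y + x) = s y + s x := by
  induction K with
  | zero =>
      intro x hx
      interval_cases x
      simp [s_zero]
  | succ K ih =>
      intro x hx
      have hP : (0:ℕ) < 2 ^ K := Nat.pow_pos (by norm_num)
      have hx2 : x / 2 < 2 ^ K := by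
        have := Nat.div_add_mod x 2
        have h2 : (2:ℕ) ^ (K + 1) = 2 * 2 ^ K := by ring
        omega
      have hrw : 2 ^ (K + 1) * y + x = 2 * (2 ^ K * y + x / 2) + x % 2 := by
        rw [pow_succ, mul_comm (2 ^ K) 2, mul_assoc]
        omega
      have hxrw : s x = s (x / 2) + x % 2 := by
        have := Nat.div_add_mod x 2
        conv_lhs => rw [show x = 2 * (x / 2) + x % 2 by omega]
        exact s_two_mul_add _ _ (by omega)
      rw [hrw, s_two_mul_add _ _ (by omega), ih _ hx2, hxrw]
      ring

lemma s_pred_pow (K : ℕ) : s (2 ^ K - 1) = K := by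
  induction K with
  | zero => simp [s_zero]
  | succ K ih =>
      have hP : (0:ℕ) < 2 ^ K := Nat.pow_pos (by norm_num)
      have hrw : 2 ^ (K + 1) - 1 = 2 * (2 ^ K - 1) + 1 := by
        have h2 : (2:ℕ) ^ (K + 1) = 2 * 2 ^ K := by ring
        omega
      rw [hrw, s_two_mul_add _ _ (le_refl 1), ih]

lemma s_pow_add_one (K : ℕ) (hK : 1 ≤ K) : s (2 ^ K + 1) = 2 := by
  have h1 : (1:ℕ) < 2 ^ K := Nat.one_lt_two_pow_iff.mpr (by omega)
  have := s_split K 1 1 h1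
  simpa [s_one] using this

theorem products_few_digits_k4_infinite (L : ℕ) (hL : 1 ≤ L) :
    ∃ ℓ m : ℕ, L ≤ ℓ ∧ L ≤ m ∧
      {p : ℕ × ℕ | 0 < p.1 ∧ 0 < p.2 ∧ Odd p.1 ∧ Odd p.2 ∧
        s p.1 = ℓ ∧ s p.2 = m ∧ s (p.1 * p.2) = 4}.Infinite := by
  obtain ⟨k, rfl⟩ : ∃ k, L = k + 1 := ⟨L - 1, by omega⟩
  -- definitions
  set S : ℕ := 2 ^ (k + 2) * (2 ^ (2 * k + 1) - 1) + (2 ^ (k + 1) - 1) with hSdef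
  set w : ℕ := 2 ^ (2 * k + 2) * S + 1 with hwdef
  set R : ℕ := 2 ^ (6 * k + 6) * 1 + w with hRdef
  set Q : ℕ := 2 ^ (k + 1) * R + 1 with hQdef
  set a : ℕ := 2 ^ (k + 1) * (2 ^ (k + 1) - 1) + 1 with hadef
  have h1k1 : (1:ℕ) ≤ 2 ^ (k + 1) := Nat.one_le_two_pow
  have h1k2 : (1:ℕ) ≤ 2 ^ (2 * k + 1) := Nat.one_le_two_pow
  have hlt1 : (1:ℕ) < 2 ^ (k + 1) := Nat.one_lt_two_pow_iff.mpr (by omega)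
  have hlt2 : (1:ℕ) < 2 ^ (2 * k + 2) := Nat.one_lt_two_pow_iff.mpr (by omega)
  -- key identities
  have hSb : S + 2 ^ (k + 1) + 1 = 2 ^ (3 * k + 3) := by
    rw [hSdef]; zify [h1k1, h1k2]; ring
  have haQ : a * Q = 2 ^ (9 * k + 9) + 1 := by
    rw [hadef, hQdef, hRdef, hwdef, hSdef]; zify [h1k1, h1k2]; ring
  have haX : a * (2 ^ (k + 1) + 1) = 2 ^ (3 * k + 3) + 1 := by
    rw [hadef]; zify [h1k1]; ring
  -- digit counts
  have hsa : s a = k + 2 := by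
    rw [hadef, s_split _ _ _ hlt1, s_pred_pow, s_one]
  have hSlt : S < 2 ^ (3 * k + 3) := by omega
  have hwlt : w < 2 ^ (6 * k + 6) := by
    rw [hwdef]
    calc 2 ^ (2 * k + 2) * S + 1 ≤ 2 ^ (2 * k + 2) * (S + 1) := by
          have : (1:ℕ) ≤ 2 ^ (2 * k + 2) := Nat.one_le_two_pow
          nlinarith
      _ ≤ 2 ^ (2 * k + 2) * 2 ^ (3 * k + 3) := by
          exact Nat.mul_le_mul_left _ (by omega)
      _ = 2 ^ (5 * k + 5) := by rw [← pow_add]; ring_nf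
      _ < 2 ^ (6 * k + 6) := Nat.pow_lt_pow_right (by norm_num) (by omega)
  have hsS : s S = 3 * k + 2 := by
    have hx : 2 ^ (k + 1) - 1 < 2 ^ (k + 2) := by
      have : (2:ℕ) ^ (k + 1) < 2 ^ (k + 2) := Nat.pow_lt_pow_right (by norm_num) (by omega)
      omega
    rw [hSdef, s_split _ _ _ hx, s_pred_pow, s_pred_pow]; omega
  have hsw : s w = 3 * k + 3 := by
    rw [hwdef, s_split _ _ _ hlt2, hsS, s_one]
  have hsR : s R = 3 * k + 4 := by
    rw [hRdef, s_split _ _ _ hwlt, s_one, hsw]; omega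
  have hsQ : s Q = 3 * k + 5 := by
    rw [hQdef, s_split _ _ _ hlt1, hsR, s_one]
  -- the family
  refine ⟨k + 2, 3 * k + 7, by omega, by omega, ?_⟩
  apply Set.infinite_of_injective_forall_mem
    (f := fun t : ℕ => (a, 2 ^ (t + 3 * k + 5) * Q + (2 ^ (k + 1) + 1)))
  · intro t1 t2 h
    simp only [Prod.mk.injEq] at h
    have h2 := h.2
    have hQpos : 0 < Q := by rw [hQdef]; positivity
    have : (2:ℕ) ^ (t1 + 3 * k + 5) = 2 ^ (t2 + 3 * k + 5) := by
      have := Nat.eq_of_mul_eq_mul_right hQpos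
        (by omega : 2 ^ (t1 + 3 * k + 5) * Q = 2 ^ (t2 + 3 * k + 5) * Q)
      exact this
    have := Nat.pow_right_injective (by norm_num : 2 ≤ 2) this
    omega
  · intro t
    set T : ℕ := t + 3 * k + 5 with hTdef
    set b : ℕ := 2 ^ T * Q + (2 ^ (k + 1) + 1) with hbdef
    have hXlt : 2 ^ (k + 1) + 1 < 2 ^ T := by
      have h1 : (2:ℕ) ^ (k + 1) + 1 ≤ 2 ^ (k + 1) + 2 ^ (k + 1) := by omega
      have h2 : (2:ℕ) ^ (k + 1) + 2 ^ (k + 1) = 2 ^ (k + 2) := by ring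
      have h3 : (2:ℕ) ^ (k + 2) < 2 ^ T := Nat.pow_lt_pow_right (by norm_num) (by omega)
      omega
    have hPlt : 2 ^ (3 * k + 3) + 1 < 2 ^ T := by
      have h1 : (2:ℕ) ^ (3 * k + 3) + 1 ≤ 2 ^ (3 * k + 3) + 2 ^ (3 * k + 3) := by omega
      have h2 : (2:ℕ) ^ (3 * k + 3) + 2 ^ (3 * k + 3) = 2 ^ (3 * k + 4) := by ring
      have h3 : (2:ℕ) ^ (3 * k + 4) < 2 ^ T := Nat.pow_lt_pow_right (by norm_num) (by omega)
      omega
    have hprod : a * b = 2 ^ T * (2 ^ (9 * k + 9) + 1) + (2 ^ (3 * k + 3) + 1) := by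
      rw [hbdef]
      calc a * (2 ^ T * Q + (2 ^ (k + 1) + 1))
          = 2 ^ T * (a * Q) + a * (2 ^ (k + 1) + 1) := by ring
        _ = 2 ^ T * (2 ^ (9 * k + 9) + 1) + (2 ^ (3 * k + 3) + 1) := by rw [haQ, haX]
    refine ⟨?_, ?_, ?_, ?_, hsa, ?_, ?_⟩
    · rw [hadef]; positivity
    · rw [hbdef]; positivity
    · exact ⟨2 ^ k * (2 ^ (k + 1) - 1), by rw [hadef, pow_succ]; ring⟩
    · refine ⟨2 ^ (T - 1) * Q + 2 ^ k, ?_⟩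
      rw [hbdef]
      have hT1 : T = (T - 1) + 1 := by omega
      calc 2 ^ T * Q + (2 ^ (k + 1) + 1)
          = 2 ^ ((T - 1) + 1) * Q + (2 ^ (k + 1) + 1) := by rw [← hT1]
        _ = 2 * (2 ^ (T - 1) * Q + 2 ^ k) + 1 := by rw [pow_succ, pow_succ]; ring
    · show s b = 3 * k + 7
      rw [hbdef, s_split _ _ _ hXlt, hsQ, s_pow_add_one _ (by omega)]
    · show s (a * b) = 4
      rw [hprod, s_split _ _ _ hPlt, s_pow_add_one _ (by omega),
        s_pow_add_one _ (by omega)]
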